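/- Hashing proposition: let Sigma in GL(n, F_2), p in F_2^n, B = 2^b, and define u_{Sigma,p}(m) = sqrt(N/B) * x_{Sigma Psi_b m + p} for m in F_2^b. Then the B-dimensional WHT of u_{Sigma,p} satisfies U_{Sigma,p}(k) = sum over j in F_2^n with H j = k of X_j (-1)^{<p,j>}, where H = Psi_b^T Sigma^T. -/

import Mathlib

open Matrix Finset

/-- Inner product over `𝔽₂`. -/
def ip {ι : Type*} [Fintype ι] (u v : ι → ZMod 2) : ZMod 2 := ∑ t, u t * v t

/-- `(-1)^b` for `b ∈ 𝔽₂`. -/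
def sgn (a : ZMod 2) : ℝ := (-1 : ℝ) ^ a.val

/-- The Walsh-Hadamard transform. -/
noncomputable def WHT {ι : Type*} [DecidableEq ι] [Fintype ι]
    (x : (ι → ZMod 2) → ℝ) (k : ι → ZMod 2) : ℝ :=
  (Real.sqrt (Fintype.card (ι → ZMod 2)))⁻¹ * ∑ m, sgn (ip k m) * x m

/-- `Ψ_b : 𝔽₂ᵇ → 𝔽₂ⁿ`, placing a `b`-bit vector in the last `b` coordinates. -/
def Psi (n b : ℕ) (hb : b ≤ n) (m : Fin b → ZMod 2) : Fin n → ZMod 2 :=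
  fun i => if _ : (i : ℕ) < n - b then 0 else m ⟨(i : ℕ) - (n - b), by have := i.isLt; omega⟩

/-- `Ψ_bᵀ : 𝔽₂ⁿ → 𝔽₂ᵇ`, extracting the last `b` coordinates. -/
def PsiT (n b : ℕ) (hb : b ≤ n) (j : Fin n → ZMod 2) : Fin b → ZMod 2 :=
  fun t => j ⟨n - b + (t : ℕ), by have := t.isLt; omega⟩

lemma sgn_zero : sgn 0 = 1 := by simp [sgn]

lemma sgn_add (a b : ZMod 2) : sgn (a + b) = sgn a * sgn b := by
  rcases (show ∀ c : ZMod 2, c = 0 ∨ c = 1 by decide) a with rfl | rfl <;>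
    rcases (show ∀ c : ZMod 2, c = 0 ∨ c = 1 by decide) b with rfl | rfl <;>
    norm_num [sgn, show ((2:ZMod 2)).val = 0 from rfl, show ((1:ZMod 2)).val = 1 from rfl,
      show ((1:ZMod 2)+1) = 2 from rfl]

lemma sgn_mul_self (a : ZMod 2) : sgn a * sgn a = 1 := by
  rcases (show ∀ c : ZMod 2, c = 0 ∨ c = 1 by decide) a with rfl | rfl <;> norm_num [sgn, show ((1:ZMod 2)).val = 1 from rfl]

lemma sgn_sum {ι : Type*} (s : Finset ι) (f : ι → ZMod 2) :
    sgn (∑ i ∈ s, f i) = ∏ i ∈ s, sgn (f i) := by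
  classical
  induction s using Finset.cons_induction with
  | empty => simp [sgn_zero]
  | cons a s ha ih => rw [Finset.sum_cons, Finset.prod_cons, sgn_add, ih]

lemma ip_comm {ι : Type*} [Fintype ι] (u v : ι → ZMod 2) : ip u v = ip v u := by
  unfold ip; exact Finset.sum_congr rfl fun i _ => mul_comm _ _

lemma ip_add_right {ι : Type*} [Fintype ι] (u v w : ι → ZMod 2) :
    ip u (v + w) = ip u v + ip u w := by
  unfold ip; rw [← Finset.sum_add_distrib]
  exact Finset.sum_congr rfl fun i _ => by simp [Pi.add_apply, mul_add]

lemma char_sum {ι : Type*} [Fintype ι] [DecidableEq ι] (y : ι → ZMod 2) :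
    ∑ w : ι → ZMod 2, sgn (ip w y) = if y = 0 then (2:ℝ) ^ (Fintype.card ι) else 0 := by
  classical
  have hsum : ∀ a : ZMod 2, ∑ c : ZMod 2, sgn (c * a) = if a = 0 then (2:ℝ) else 0 := by
    intro a
    have huniv : (Finset.univ : Finset (ZMod 2)) = {0, 1} := by decide
    rw [huniv, Finset.sum_insert (by decide), Finset.sum_singleton]
    rcases (show ∀ c : ZMod 2, c = 0 ∨ c = 1 by decide) a with rfl | rfl <;> norm_num [sgn, show ((1:ZMod 2)).val = 1 from rfl] <;> norm_num
  have h1 : ∀ w : ι → ZMod 2, sgn (ip w y) = ∏ i, sgn (w i * y i) := fun w => sgn_sum _ _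
  simp_rw [h1]
  rw [← Fintype.piFinset_univ, Finset.sum_prod_piFinset Finset.univ (fun i c => sgn (c * y i))]
  simp_rw [hsum]
  by_cases hy : y = 0
  · subst hy; simp
  · obtain ⟨i, hi⟩ := Function.ne_iff.mp hy
    rw [Finset.prod_eq_zero (Finset.mem_univ i) (by simpa using hi), if_neg hy]

def glue (n b : ℕ) (hb : b ≤ n) (w : Fin (n - b) → ZMod 2) (m : Fin b → ZMod 2) :
    Fin n → ZMod 2 :=
  fun i => if h : (i : ℕ) < n - b then w ⟨i, h⟩
    else m ⟨(i : ℕ) - (n - b), by have := i.isLt; omega⟩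

def fp (n b : ℕ) (hb : b ≤ n) (s : Fin n → ZMod 2) : Fin (n - b) → ZMod 2 :=
  fun t => s ⟨t, by have := t.isLt; omega⟩

lemma PsiT_glue (n b : ℕ) (hb : b ≤ n) (w : Fin (n - b) → ZMod 2) (m : Fin b → ZMod 2) :
    PsiT n b hb (glue n b hb w m) = m := by
  funext t
  have h : ¬ (n - b + (t : ℕ) < n - b) := by omega
  simp only [PsiT, glue, dif_neg h]
  congr 1
  ext
  simp

lemma fp_glue (n b : ℕ) (hb : b ≤ n) (w : Fin (n - b) → ZMod 2) (m : Fin b → ZMod 2) :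
    fp n b hb (glue n b hb w m) = w := by
  funext t
  have h : ((t : ℕ)) < n - b := t.isLt
  simp only [fp, glue, dif_pos h]

lemma glue_fp_PsiT (n b : ℕ) (hb : b ≤ n) (s : Fin n → ZMod 2) :
    glue n b hb (fp n b hb s) (PsiT n b hb s) = s := by
  funext i
  by_cases h : (i : ℕ) < n - b
  · simp only [glue, dif_pos h, fp]
  · simp only [glue, dif_neg h, PsiT]
    congr 1
    ext
    simp
    omega

lemma glue_zero (n b : ℕ) (hb : b ≤ n) (m : Fin b → ZMod 2) :
    glue n b hb 0 m = Psi n b hb m := by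
  funext i
  by_cases h : (i : ℕ) < n - b <;> simp [glue, Psi, h]

def glueEquiv (n b : ℕ) (hb : b ≤ n) :
    ((Fin (n - b) → ZMod 2) × (Fin b → ZMod 2)) ≃ (Fin n → ZMod 2) where
  toFun q := glue n b hb q.1 q.2
  invFun s := (fp n b hb s, PsiT n b hb s)
  left_inv q := by
    ext1
    · exact fp_glue n b hb q.1 q.2
    · exact PsiT_glue n b hb q.1 q.2
  right_inv s := glue_fp_PsiT n b hb s

lemma ip_glue (n b : ℕ) (hb : b ≤ n) (w : Fin (n - b) → ZMod 2) (m : Fin b → ZMod 2)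
    (s : Fin n → ZMod 2) :
    ip (glue n b hb w m) s = ip w (fp n b hb s) + ip m (PsiT n b hb s) := by
  have hnb : (n - b) + b = n := by omega
  unfold ip
  rw [← Fintype.sum_equiv (finCongr hnb)
      (fun i => glue n b hb w m (finCongr hnb i) * s (finCongr hnb i))
      (fun i => glue n b hb w m i * s i) (fun i => rfl)]
  rw [Fin.sum_univ_add]
  congr 1
  · refine Finset.sum_congr rfl fun t _ => ?_
    have h : ((finCongr hnb (Fin.castAdd b t) : Fin n) : ℕ) < n - b := by
      simp [t.isLt]
    rw [show glue n b hb w m (finCongr hnb (Fin.castAdd b t)) = w t by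
      simp only [glue, dif_pos h]; exact congrArg w (Fin.ext (by simp))]
    exact congrArg (w t * ·) (congrArg s (Fin.ext (by simp [fp])))
  · refine Finset.sum_congr rfl fun t _ => ?_
    have h : ¬ ((finCongr hnb (Fin.natAdd (n - b) t) : Fin n) : ℕ) < n - b := by
      simp
    rw [show glue n b hb w m (finCongr hnb (Fin.natAdd (n - b) t)) = m t by
      simp only [glue, dif_neg h]; exact congrArg m (Fin.ext (by simp))]
    exact congrArg (m t * ·) (congrArg s (Fin.ext (by simp [PsiT])))

noncomputable def mvEquiv {n : ℕ} (A : Matrix (Fin n) (Fin n) (ZMod 2)) (hA : IsUnit A.det) :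
    (Fin n → ZMod 2) ≃ (Fin n → ZMod 2) where
  toFun := A.mulVec
  invFun := A⁻¹.mulVec
  left_inv v := by
    rw [Matrix.mulVec_mulVec, Matrix.nonsing_inv_mul A hA, Matrix.one_mulVec]
  right_inv v := by
    rw [Matrix.mulVec_mulVec, Matrix.mul_nonsing_inv A hA, Matrix.one_mulVec]

lemma ip_mulVec {n : ℕ} (A : Matrix (Fin n) (Fin n) (ZMod 2)) (j s : Fin n → ZMod 2) :
    ip j (A.mulVec s) = ip (Aᵀ.mulVec j) s := by
  show j ⬝ᵥ A.mulVec s = Aᵀ.mulVec j ⬝ᵥ s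
  rw [Matrix.dotProduct_mulVec, Matrix.mulVec_transpose]

lemma const_eq (n b : ℕ) (hb : b ≤ n) :
    (Real.sqrt (2 ^ b))⁻¹ * Real.sqrt ((2 ^ n : ℝ) / (2 ^ b : ℝ)) =
      (Real.sqrt (2 ^ n))⁻¹ * 2 ^ (n - b) := by
  have h2b : (0:ℝ) < 2 ^ b := by positivity
  have h2n : (0:ℝ) < 2 ^ n := by positivity
  have hsb : Real.sqrt (2 ^ b) * Real.sqrt (2 ^ b) = 2 ^ b := Real.mul_self_sqrt h2b.le
  have hsn : Real.sqrt (2 ^ n) * Real.sqrt (2 ^ n) = 2 ^ n := Real.mul_self_sqrt h2n.le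
  have hpos_sb : (0:ℝ) < Real.sqrt (2 ^ b) := Real.sqrt_pos.mpr h2b
  have hpos_sn : (0:ℝ) < Real.sqrt (2 ^ n) := Real.sqrt_pos.mpr h2n
  have key : (2:ℝ) ^ (n - b) * 2 ^ b = 2 ^ n := by
    rw [← pow_add]; congr 1; omega
  rw [Real.sqrt_div h2n.le]
  rw [div_eq_mul_inv, eq_comm]
  rw [inv_mul_eq_iff_eq_mul₀ hpos_sn.ne']
  field_simp
  nlinarith [hsb, hsn, key, hpos_sb, hpos_sn]


/-- Hashing proposition: the `B = 2^b` dimensional WHT of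
`u(m) = √(N/B) · x(Σ Ψ_b m + p)` computes the hash outputs
`U(k) = ∑_{j : Ψ_bᵀ Σᵀ j = k} X_j (-1)^⟨p,j⟩`. -/
theorem stmt7 (n b : ℕ) (hb : b ≤ n) (x : (Fin n → ZMod 2) → ℝ)
    (A : Matrix (Fin n) (Fin n) (ZMod 2)) (hA : IsUnit A.det)
    (p : Fin n → ZMod 2) (k : Fin b → ZMod 2) :
    WHT (fun m => Real.sqrt ((2 ^ n : ℝ) / (2 ^ b : ℝ)) *
        x (A.mulVec (Psi n b hb m) + p)) k =
      ∑ j ∈ Finset.univ.filter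
          (fun j : Fin n → ZMod 2 => PsiT n b hb (Aᵀ.mulVec j) = k),
        WHT x j * sgn (ip p j) := by
  classical
  have hAT : IsUnit Aᵀ.det := by rwa [Matrix.det_transpose]
  have stepA : ∀ j : Fin n → ZMod 2,
      (∑ s, sgn (ip j s) * x s) * sgn (ip p j)
        = ∑ s, sgn (ip (Aᵀ.mulVec j) s) * x (A.mulVec s + p) := by
    intro j
    rw [Finset.sum_mul]
    rw [← Equiv.sum_comp ((mvEquiv A hA).trans (Equiv.addRight p))
      (fun s => sgn (ip j s) * x s * sgn (ip p j))]
    refine Finset.sum_congr rfl fun s _ => ?_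
    simp only [Equiv.trans_apply, Equiv.coe_addRight, mvEquiv, Equiv.coe_fn_mk]
    rw [ip_add_right, sgn_add, ip_mulVec, ip_comm j p]
    calc sgn (ip (Aᵀ.mulVec j) s) * sgn (ip p j) * x (A.mulVec s + p) * sgn (ip p j)
        = sgn (ip (Aᵀ.mulVec j) s) * x (A.mulVec s + p) * (sgn (ip p j) * sgn (ip p j)) := by
          ring
      _ = _ := by rw [sgn_mul_self]; ring
  have key : (∑ j ∈ Finset.univ.filter
          (fun j : Fin n → ZMod 2 => PsiT n b hb (Aᵀ.mulVec j) = k),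
        (∑ s, sgn (ip j s) * x s) * sgn (ip p j))
      = 2 ^ (n - b) * ∑ m, sgn (ip k m) * x (A.mulVec (Psi n b hb m) + p) := by
    calc
      _ = ∑ j ∈ Finset.univ.filter
            (fun j : Fin n → ZMod 2 => PsiT n b hb (Aᵀ.mulVec j) = k),
            ∑ s, sgn (ip (Aᵀ.mulVec j) s) * x (A.mulVec s + p) :=
        Finset.sum_congr rfl fun j _ => stepA j
      _ = ∑ v ∈ Finset.univ.filter (fun v : Fin n → ZMod 2 => PsiT n b hb v = k),
            ∑ s, sgn (ip v s) * x (A.mulVec s + p) := by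
        refine Finset.sum_equiv (mvEquiv Aᵀ hAT) ?_ ?_
        · intro j; simp [mvEquiv, Finset.mem_filter]
        · intro j _; rfl
      _ = ∑ w : Fin (n - b) → ZMod 2,
            ∑ s, sgn (ip (glue n b hb w k) s) * x (A.mulVec s + p) := by
        rw [Finset.sum_filter]
        rw [← Equiv.sum_comp (glueEquiv n b hb)
          (fun v => if PsiT n b hb v = k then
            ∑ s, sgn (ip v s) * x (A.mulVec s + p) else 0)]
        rw [Fintype.sum_prod_type]
        refine Finset.sum_congr rfl fun w _ => ?_
        simp only [glueEquiv, Equiv.coe_fn_mk, PsiT_glue]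
        simp
      _ = ∑ s, ((if fp n b hb s = 0 then (2:ℝ) ^ (n - b) else 0)
              * sgn (ip k (PsiT n b hb s))) * x (A.mulVec s + p) := by
        rw [Finset.sum_comm]
        refine Finset.sum_congr rfl fun s _ => ?_
        rw [← Finset.sum_mul]
        congr 1
        simp_rw [ip_glue, sgn_add]
        rw [← Finset.sum_mul, char_sum]
        simp [Fintype.card_fin]
      _ = ∑ m, (2:ℝ) ^ (n - b) * (sgn (ip k m) * x (A.mulVec (Psi n b hb m) + p)) := by
        rw [← Equiv.sum_comp (glueEquiv n b hb)
          (fun s => ((if fp n b hb s = 0 then (2:ℝ) ^ (n - b) else 0)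
              * sgn (ip k (PsiT n b hb s))) * x (A.mulVec s + p))]
        rw [Fintype.sum_prod_type]
        rw [Finset.sum_comm]
        refine Finset.sum_congr rfl fun m _ => ?_
        simp only [glueEquiv, Equiv.coe_fn_mk, fp_glue, PsiT_glue]
        rw [Finset.sum_eq_single 0]
        · rw [if_pos rfl, glue_zero]; ring
        · intro w _ hw; rw [if_neg hw]; ring
        · intro h; exact absurd (Finset.mem_univ _) h
      _ = _ := by
        rw [Finset.mul_sum]
  -- now the main statement
  unfold WHT
  have hcB : ((Fintype.card (Fin b → ZMod 2) : ℕ) : ℝ) = (2:ℝ) ^ b := by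
    simp [Fintype.card_fun]
  have hcN : ((Fintype.card (Fin n → ZMod 2) : ℕ) : ℝ) = (2:ℝ) ^ n := by
    simp [Fintype.card_fun]
  rw [hcB]
  rw [show (∑ j ∈ Finset.univ.filter
          (fun j : Fin n → ZMod 2 => PsiT n b hb (Aᵀ.mulVec j) = k),
        ((Real.sqrt (Fintype.card (Fin n → ZMod 2)))⁻¹ * ∑ s, sgn (ip j s) * x s)
          * sgn (ip p j))
      = (Real.sqrt (Fintype.card (Fin n → ZMod 2)))⁻¹ *
        ∑ j ∈ Finset.univ.filter
          (fun j : Fin n → ZMod 2 => PsiT n b hb (Aᵀ.mulVec j) = k),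
        (∑ s, sgn (ip j s) * x s) * sgn (ip p j) from by
    rw [Finset.mul_sum]
    exact Finset.sum_congr rfl fun j _ => by ring]
  rw [key, hcN]
  have hL : ∑ m, sgn (ip k m) * (Real.sqrt ((2 ^ n : ℝ) / (2 ^ b : ℝ)) *
        x (A.mulVec (Psi n b hb m) + p))
      = Real.sqrt ((2 ^ n : ℝ) / (2 ^ b : ℝ)) *
        ∑ m, sgn (ip k m) * x (A.mulVec (Psi n b hb m) + p) := by
    rw [Finset.mul_sum]
    exact Finset.sum_congr rfl fun m _ => by ring
  rw [hL, ← mul_assoc, ← mul_assoc, const_eq n b hb]
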